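/- Let μ denote the Möbius function of the lattice of partitions of {1,…,n} under the refinement order. For partitions Π ≤ Π' of {1,…,n}, μ(Π, Π') = (−1)^{|Π|−|Π'|} ∏_{i=1}^{|Π'|} (b_i − 1)!, where b_i is the number of blocks of Π contained in the i-th block of Π'. -/

import Mathlib

open scoped Classical

instance setoidFinite {n : ℕ} : Finite (Setoid (Fin n)) :=
  Finite.of_injective (fun r : Setoid (Fin n) => (⇑r : Fin n → Fin n → Prop))
    (fun _ _ h => Setoid.eq_iff_rel_eq.2 h)

noncomputable def numBlocks {n : ℕ} (r : Setoid (Fin n)) : ℕ :=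
  Nat.card (Quotient r)

noncomputable def blocksIn {n : ℕ} (r r' : Setoid (Fin n)) (c : Quotient r') : ℕ :=
  Nat.card {d : Quotient r // ∃ x : Fin n, Quotient.mk r x = d ∧ Quotient.mk r' x = c}

namespace Stmt8Aux

variable {n : ℕ}

/-- The induced map on quotients from `r ≤ s`. -/
def pmap {r s : Setoid (Fin n)} (h : r ≤ s) : Quotient r → Quotient s :=
  Quot.map id (fun a b hab => h hab)

@[simp] lemma pmap_mk {r s : Setoid (Fin n)} (h : r ≤ s) (x : Fin n) :
    pmap h (Quotient.mk r x) = Quotient.mk s x := rfl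

lemma pmap_surjective {r s : Setoid (Fin n)} (h : r ≤ s) :
    Function.Surjective (pmap h) := by
  intro c
  obtain ⟨x, rfl⟩ := Quotient.exists_rep c
  exact ⟨Quotient.mk r x, rfl⟩

lemma blocksIn_eq {r r' : Setoid (Fin n)} (h : r ≤ r') (c : Quotient r') :
    blocksIn r r' c = Nat.card {d : Quotient r // pmap h d = c} := by
  apply Nat.card_congr
  apply Equiv.subtypeEquivRight
  intro d
  constructor
  · rintro ⟨x, rfl, rfl⟩; rfl
  · rintro rfl
    obtain ⟨x, rfl⟩ := Quotient.exists_rep d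
    exact ⟨x, rfl, rfl⟩

end Stmt8Aux


noncomputable instance {n : ℕ} (r : Setoid (Fin n)) : Fintype (Quotient r) :=
  Fintype.ofFinite _

noncomputable instance {n : ℕ} : Fintype (Setoid (Fin n)) :=
  Fintype.ofFinite _

namespace Stmt8Aux
variable {n : ℕ}
open Finset

lemma numBlocks_eq (r : Setoid (Fin n)) : numBlocks r = Fintype.card (Quotient r) :=
  Nat.card_eq_fintype_card

lemma blocksIn_eq_card {r r' : Setoid (Fin n)} (h : r ≤ r') (c : Quotient r') :
    blocksIn r r' c = (univ.filter (fun d : Quotient r => pmap h d = c)).card := by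
  rw [blocksIn_eq h, Nat.card_eq_fintype_card, Fintype.card_subtype]

lemma sum_blocksIn {r r' : Setoid (Fin n)} (h : r ≤ r') :
    ∑ c : Quotient r', blocksIn r r' c = numBlocks r := by
  simp_rw [blocksIn_eq_card h, numBlocks_eq]
  rw [← Finset.card_univ,
    Finset.card_eq_sum_card_fiberwise (fun x _ => Finset.mem_univ (pmap h x))]

lemma one_le_blocksIn {r r' : Setoid (Fin n)} (h : r ≤ r') (c : Quotient r') :
    1 ≤ blocksIn r r' c := by
  rw [blocksIn_eq_card h]
  rw [Nat.one_le_iff_ne_zero, Ne, Finset.card_eq_zero, ← Ne, ← Finset.nonempty_iff_ne_empty]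
  obtain ⟨d, hd⟩ := pmap_surjective h c
  exact ⟨d, by simp [hd]⟩

lemma numBlocks_le {r r' : Setoid (Fin n)} (h : r ≤ r') :
    numBlocks r' ≤ numBlocks r := by
  rw [numBlocks_eq, numBlocks_eq]
  exact Fintype.card_le_of_surjective _ (pmap_surjective h)

end Stmt8Aux

namespace Stmt8Aux
variable {n : ℕ}
open Finset

/-- The setoid obtained from `t` by merging the classes of `x` and `y`. -/
def mergeCl (t : Setoid (Fin n)) (x y : Fin n) : Setoid (Fin n) where
  r a b := t a b ∨ ((t x a ∨ t y a) ∧ (t x b ∨ t y b))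
  iseqv := by
    constructor
    · intro a; exact Or.inl (t.refl a)
    · rintro a b (h | ⟨ha, hb⟩)
      · exact Or.inl (t.symm h)
      · exact Or.inr ⟨hb, ha⟩
    · rintro a b c (hab | ⟨ha, hb⟩) (hbc | ⟨hb', hc⟩)
      · exact Or.inl (t.trans hab hbc)
      · exact Or.inr ⟨hb'.imp (fun h => t.trans h (t.symm hab)) (fun h => t.trans h (t.symm hab)), hc⟩
      · exact Or.inr ⟨ha, hb.imp (fun h => t.trans h hbc) (fun h => t.trans h hbc)⟩
      · exact Or.inr ⟨ha, hc⟩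

lemma mergeCl_iff {t : Setoid (Fin n)} {x y a b : Fin n} :
    mergeCl t x y a b ↔ t a b ∨ ((t x a ∨ t y a) ∧ (t x b ∨ t y b)) := Iff.rfl

lemma le_mergeCl (t : Setoid (Fin n)) (x y : Fin n) : t ≤ mergeCl t x y := by
  intro a b h; exact Or.inl h

lemma mergeCl_le {t r₂ : Setoid (Fin n)} {x y : Fin n} (h : t ≤ r₂) (hxy : r₂ x y) :
    mergeCl t x y ≤ r₂ := by
  rintro a b (hab | ⟨(ha | ha), (hb | hb)⟩)
  · exact h hab
  · exact r₂.trans (r₂.symm (h ha)) (h hb)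
  · exact r₂.trans (r₂.symm (h ha)) (r₂.trans hxy (h hb))
  · exact r₂.trans (r₂.symm (h ha)) (r₂.trans (r₂.symm hxy) (h hb))
  · exact r₂.trans (r₂.symm (h ha)) (h hb)

section Merge
variable {t r₂ : Setoid (Fin n)} {x y : Fin n} (ht : t ≤ r₂) (hxy : r₂ x y) (hnt : ¬ t x y)

/-- collision characterization for the merge map on quotients. -/
lemma merge_coll {d d' : Quotient t}
    (h : pmap (le_mergeCl t x y) d = pmap (le_mergeCl t x y) d') :
    d = d' ∨ ((d = Quotient.mk t x ∨ d = Quotient.mk t y) ∧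
              (d' = Quotient.mk t x ∨ d' = Quotient.mk t y)) := by
  obtain ⟨a, rfl⟩ := Quotient.exists_rep d
  obtain ⟨b, rfl⟩ := Quotient.exists_rep d'
  simp only [pmap_mk, Quotient.eq] at h
  rcases h with hab | ⟨ha, hb⟩
  · exact Or.inl (Quotient.sound hab)
  · refine Or.inr ⟨?_, ?_⟩
    · exact ha.imp (fun h => (Quotient.sound (t.symm h)))
        (fun h => (Quotient.sound (t.symm h)))
    · exact hb.imp (fun h => (Quotient.sound (t.symm h)))
        (fun h => (Quotient.sound (t.symm h)))

lemma pmap_pmap (d : Quotient t) :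
    pmap (mergeCl_le ht hxy) (pmap (le_mergeCl t x y) d) = pmap ht d := by
  obtain ⟨a, rfl⟩ := Quotient.exists_rep d
  rfl

include ht hxy in
lemma merge_fiber_card_ne (c : Quotient r₂) (hc : c ≠ Quotient.mk r₂ x) :
    (univ.filter (fun d : Quotient (mergeCl t x y) => pmap (mergeCl_le ht hxy) d = c)).card =
    (univ.filter (fun d : Quotient t => pmap ht d = c)).card := by
  symm
  apply Finset.card_bij (fun d _ => pmap (le_mergeCl t x y) d)
  · intro d hd
    simp only [mem_filter, mem_univ, true_and] at hd ⊢
    rw [pmap_pmap ht hxy, hd]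
  · intro d hd d' hd' h
    simp only [mem_filter, mem_univ, true_and] at hd hd'
    rcases merge_coll h with h | ⟨h1, h2⟩
    · exact h
    · exfalso
      rcases h1 with rfl | rfl
      · exact hc (hd ▸ rfl)
      · apply hc
        rw [← hd]
        exact (Quotient.sound (r₂.symm hxy) : Quotient.mk r₂ y = Quotient.mk r₂ x).symm ▸
          (rfl : pmap ht (Quotient.mk t y) = Quotient.mk r₂ y) ▸ rfl
  · intro d' hd'
    simp only [mem_filter, mem_univ, true_and] at hd'
    obtain ⟨d, rfl⟩ := pmap_surjective (le_mergeCl t x y) d'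
    refine ⟨d, ?_, rfl⟩
    simp only [mem_filter, mem_univ, true_and]
    rw [← pmap_pmap ht hxy, hd']

end Merge
end Stmt8Aux

namespace Stmt8Aux
variable {n : ℕ}
open Finset

section Merge2
variable {t r₂ : Setoid (Fin n)} {x y : Fin n} (ht : t ≤ r₂) (hxy : r₂ x y) (hnt : ¬ t x y)

include hnt in
lemma merge_fiber_card_eq :
    (univ.filter (fun d : Quotient (mergeCl t x y) =>
        pmap (mergeCl_le ht hxy) d = Quotient.mk r₂ x)).card + 1 =
    (univ.filter (fun d : Quotient t => pmap ht d = Quotient.mk r₂ x)).card := by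
  have hyx : (Quotient.mk t y : Quotient t) ∈
      univ.filter (fun d : Quotient t => pmap ht d = Quotient.mk r₂ x) := by
    simp only [mem_filter, mem_univ, true_and, pmap_mk]
    exact Quotient.sound (r₂.symm hxy)
  rw [← Finset.card_erase_add_one hyx]
  congr 1
  symm
  apply Finset.card_bij (fun d _ => pmap (le_mergeCl t x y) d)
  · intro d hd
    simp only [mem_erase, mem_filter, mem_univ, true_and] at hd
    simp only [mem_filter, mem_univ, true_and]
    rw [pmap_pmap ht hxy, hd.2]
  · intro d hd d' hd' h
    simp only [mem_erase, mem_filter, mem_univ, true_and] at hd hd'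
    rcases merge_coll h with h | ⟨h1, h2⟩
    · exact h
    · rcases h1 with rfl | h1
      · rcases h2 with rfl | h2
        · rfl
        · exact absurd h2 hd'.1
      · exact absurd h1 hd.1
  · intro d' hd'
    simp only [mem_filter, mem_univ, true_and] at hd'
    obtain ⟨d, rfl⟩ := pmap_surjective (le_mergeCl t x y) d'
    by_cases hdy : d = Quotient.mk t y
    · refine ⟨Quotient.mk t x, ?_, ?_⟩
      · simp only [mem_erase, mem_filter, mem_univ, true_and, pmap_mk]
        exact ⟨fun h => hnt (Quotient.exact h), trivial⟩
      · subst hdy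
        exact Quotient.sound (Or.inr ⟨Or.inl (t.refl x), Or.inr (t.refl y)⟩)
    · refine ⟨d, ?_, rfl⟩
      simp only [mem_erase, mem_filter, mem_univ, true_and]
      refine ⟨hdy, ?_⟩
      rw [← pmap_pmap ht hxy, hd']

end Merge2
end Stmt8Aux

namespace Stmt8Aux
variable {n : ℕ}
open Finset

/-- Two-block partition: the `r₁`-class of `x₀` versus everything else. -/
def qs (r₁ : Setoid (Fin n)) (x₀ : Fin n) : Setoid (Fin n) where
  r a b := r₁ x₀ a ↔ r₁ x₀ b
  iseqv := ⟨fun _ => Iff.rfl, Iff.symm, Iff.trans⟩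

lemma qs_iff {r₁ : Setoid (Fin n)} {x₀ a b : Fin n} :
    qs r₁ x₀ a b ↔ (r₁ x₀ a ↔ r₁ x₀ b) := Iff.rfl

/-- The weight of `s` in the interval below `r₂`. -/
noncomputable def wt (r₂ s : Setoid (Fin n)) : ℤ :=
  ∏ c : Quotient r₂, ((-1) ^ blocksIn s r₂ c * ((blocksIn s r₂ c - 1).factorial : ℤ))

/-- Merging the class of `x₀` with the class `e`. -/
noncomputable def M (t : Setoid (Fin n)) (x₀ : Fin n) (e : Quotient t) : Setoid (Fin n) :=
  mergeCl t x₀ e.out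

section Fiber

variable {r₁ r₂ : Setoid (Fin n)} {x₀ y₀ : Fin n} (hle : r₁ ≤ r₂)
  (h2 : r₂ x₀ y₀) (h1 : ¬ r₁ x₀ y₀) {t : Setoid (Fin n)} (hrt : r₁ ≤ t) (htr₂ : t ≤ r₂)
  (hD : ∀ z, t x₀ z ↔ r₁ x₀ z)

include hD in
lemma t_le_qs : t ≤ qs r₁ x₀ := by
  intro a b hab
  rw [qs_iff]
  constructor
  · intro ha; exact (hD b).1 (t.trans ((hD a).2 ha) hab)
  · intro hb; exact (hD a).1 (t.trans ((hD b).2 hb) (t.symm hab))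

/-- The `E` of admissible classes to merge with the class of `x₀`. -/
noncomputable def Efin (htr₂ : t ≤ r₂) (x₀ : Fin n) : Finset (Quotient t) :=
  univ.filter (fun d => pmap htr₂ d = Quotient.mk r₂ x₀ ∧ d ≠ Quotient.mk t x₀)

include hrt htr₂ hD in
lemma fiber_eq :
    (univ.filter (fun s : Setoid (Fin n) => (r₁ ≤ s ∧ s ≤ r₂) ∧ s ⊓ qs r₁ x₀ = t)) =
      insert t ((Efin htr₂ x₀).image (M t x₀)) := by
  have hqt := t_le_qs hD
  ext s
  simp only [mem_filter, mem_univ, true_and, mem_insert, mem_image, Efin, Finset.mem_filter]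
  constructor
  · rintro ⟨⟨hs₁, hs₂⟩, hst⟩
    have hts : t ≤ s := hst ▸ inf_le_left
    by_cases hst' : s = t
    · exact Or.inl hst'
    right
    have hex : ∃ a b, s a b ∧ ¬ t a b := by
      by_contra hcon
      push_neg at hcon
      exact hst' (le_antisymm (fun a b hab => hcon a b hab) hts)
    obtain ⟨a, b, hab, hnab⟩ := hex
    have hnq : ¬ (r₁ x₀ a ↔ r₁ x₀ b) := fun hq => hnab (by
      have : (s ⊓ qs r₁ x₀) a b := ⟨hab, hq⟩
      rwa [hst] at this)
    -- produce y with  s x₀ y, ¬ r₁ x₀ y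
    obtain ⟨y, hsy, hny⟩ : ∃ y, s x₀ y ∧ ¬ r₁ x₀ y := by
      by_cases ha : r₁ x₀ a <;> by_cases hb : r₁ x₀ b
      · exact absurd (iff_of_true ha hb) hnq
      · exact ⟨b, s.trans (hs₁ ha) hab, hb⟩
      · exact ⟨a, s.trans (hs₁ hb) (s.symm hab), ha⟩
      · exact absurd (iff_of_false ha hb) hnq
    refine ⟨Quotient.mk t y, ⟨?_, ?_⟩, ?_⟩
    · exact Quotient.sound (r₂.symm (hs₂ hsy))
    · intro h
      exact hny ((hD y).1 (t.symm (Quotient.exact h)))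
    · -- M t x₀ ⟦y⟧ = s
      have hyout : t ((Quotient.mk t y).out) y := Quotient.exact (Quotient.out_eq _)
      set y' := (Quotient.mk t y).out with hy'
      have hsy' : s x₀ y' := s.trans hsy (s.symm (hts hyout))
      have hny' : ¬ t x₀ y' := fun h => hny ((hD y).1 (t.trans h hyout))
      have hnr' : ¬ r₁ x₀ y' := fun h => hny' ((hD y').2 h)
      apply Setoid.ext
      intro a' b'
      rw [show (M t x₀ (Quotient.mk t y)) a' b' ↔ mergeCl t x₀ y' a' b' from Iff.rfl,
        mergeCl_iff]
      have hS : ∀ z, (t x₀ z ∨ t y' z) → s x₀ z := by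
        rintro z (hz | hz)
        · exact hts hz
        · exact s.trans hsy' (hts hz)
      constructor
      · rintro (h | ⟨ha, hb⟩)
        · exact hts h
        · exact s.trans (s.symm (hS _ ha)) (hS _ hb)
      · intro hab'
        by_cases hina : t x₀ a' ∨ t y' a' <;> by_cases hinb : t x₀ b' ∨ t y' b'
        · exact Or.inr ⟨hina, hinb⟩
        · -- impossible : b' would be in the class of y'
          exfalso
          have hsb' : s y' b' := s.trans (s.symm hsy') (s.trans (hS _ hina) hab')
          have hrb : ¬ r₁ x₀ b' := fun h => hinb (Or.inl ((hD b').2 h))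
          have hq : qs r₁ x₀ y' b' := iff_of_false hnr' hrb
          have htb : (s ⊓ qs r₁ x₀) y' b' := ⟨hsb', hq⟩
          rw [hst] at htb
          exact hinb (Or.inr htb)
        · exfalso
          have hsb' : s y' a' := s.trans (s.symm hsy')
            (s.trans (hS _ hinb) (s.symm hab'))
          have hra : ¬ r₁ x₀ a' := fun h => hina (Or.inl ((hD a').2 h))
          have hq : qs r₁ x₀ y' a' := iff_of_false hnr' hra
          have hta : (s ⊓ qs r₁ x₀) y' a' := ⟨hsb', hq⟩
          rw [hst] at hta
          exact hina (Or.inr hta)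
        · have hra : ¬ r₁ x₀ a' := fun h => hina (Or.inl ((hD a').2 h))
          have hrb : ¬ r₁ x₀ b' := fun h => hinb (Or.inl ((hD b').2 h))
          have hta : (s ⊓ qs r₁ x₀) a' b' := ⟨hab', iff_of_false hra hrb⟩
          rw [hst] at hta
          exact Or.inl hta
  · rintro (rfl | ⟨e, ⟨he₁, he₂⟩, rfl⟩)
    · exact ⟨⟨hrt, htr₂⟩, le_antisymm inf_le_left (le_inf le_rfl hqt)⟩
    · set y' := e.out with hy'
      have heq : Quotient.mk t y' = e := Quotient.out_eq e
      have hr₂y : r₂ x₀ y' := by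
        have : Quotient.mk r₂ y' = Quotient.mk r₂ x₀ := by
          rw [← pmap_mk htr₂ y', heq, he₁]
        exact r₂.symm (Quotient.exact this)
      have hnty : ¬ t x₀ y' := fun h => he₂ (heq ▸ Quotient.sound (t.symm h))
      have hnry : ¬ r₁ x₀ y' := fun h => hnty ((hD y').2 h)
      refine ⟨⟨le_trans hrt (le_mergeCl t x₀ y'), mergeCl_le htr₂ hr₂y⟩, ?_⟩
      apply le_antisymm
      · intro a b hab
        rcases hab with ⟨hm, hq⟩
        rw [show (M t x₀ e) a b ↔ mergeCl t x₀ y' a b from Iff.rfl, mergeCl_iff] at hm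
        rcases hm with h | ⟨ha, hb⟩
        · exact h
        · rw [qs_iff] at hq
          rcases ha with ha | ha
          · have hrb : r₁ x₀ b := hq.1 ((hD a).1 ha)
            exact t.trans (t.symm ha) ((hD b).2 hrb)
          · have hnra : ¬ r₁ x₀ a := fun h => hnty (t.trans ((hD a).2 h) (t.symm ha))
            have hnrb : ¬ r₁ x₀ b := fun h => hnra (hq.2 h)
            rcases hb with hb | hb
            · exact absurd ((hD b).1 hb) hnrb
            · exact t.trans (t.symm ha) hb
      · exact le_inf (le_mergeCl t x₀ y') (t_le_qs hD)

end Fiber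
end Stmt8Aux

namespace Stmt8Aux
variable {n : ℕ}
open Finset

section Fiber2
variable {r₁ r₂ : Setoid (Fin n)} {x₀ : Fin n} {t : Setoid (Fin n)} (htr₂ : t ≤ r₂)

lemma mem_Efin {e : Quotient t} :
    e ∈ Efin htr₂ x₀ ↔ (pmap htr₂ e = Quotient.mk r₂ x₀ ∧ e ≠ Quotient.mk t x₀) := by
  simp [Efin]

lemma Efin_not_t {e : Quotient t} (he : e ∈ Efin htr₂ x₀) : ¬ t x₀ e.out := by
  rw [mem_Efin] at he
  intro h
  exact he.2 ((Quotient.out_eq e) ▸ Quotient.sound (t.symm h))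

lemma M_mem_rel {e : Quotient t} : (M t x₀ e) x₀ e.out :=
  Or.inr ⟨Or.inl (t.refl x₀), Or.inr (t.refl e.out)⟩

lemma M_injOn {e e' : Quotient t} (he : e ∈ Efin htr₂ x₀) (he' : e' ∈ Efin htr₂ x₀)
    (h : M t x₀ e = M t x₀ e') : e = e' := by
  have h1 : (M t x₀ e') x₀ e.out := h ▸ M_mem_rel
  rcases h1 with h1 | ⟨_, (hb | hb)⟩
  · exact absurd h1 (Efin_not_t htr₂ he)
  · exact absurd hb (Efin_not_t htr₂ he)
  · rw [← Quotient.out_eq e, ← Quotient.out_eq e']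
    exact Quotient.sound (t.symm hb)

lemma t_ne_M {e : Quotient t} (he : e ∈ Efin htr₂ x₀) : t ≠ M t x₀ e := by
  intro h
  have hrel : (M t x₀ e) x₀ e.out := M_mem_rel
  rw [← h] at hrel
  exact Efin_not_t htr₂ he hrel

lemma Efin_card : (Efin htr₂ x₀).card + 1 = blocksIn t r₂ (Quotient.mk r₂ x₀) := by
  rw [blocksIn_eq_card htr₂]
  have hmem : (Quotient.mk t x₀ : Quotient t) ∈
      univ.filter (fun d : Quotient t => pmap htr₂ d = Quotient.mk r₂ x₀) := by
    simp
  have hE : Efin htr₂ x₀ =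
      (univ.filter (fun d : Quotient t => pmap htr₂ d = Quotient.mk r₂ x₀)).erase
        (Quotient.mk t x₀) := by
    ext d
    simp only [Efin, mem_filter, mem_univ, true_and, mem_erase]
    tauto
  rw [hE, Finset.card_erase_add_one hmem]

end Fiber2
end Stmt8Aux

namespace Stmt8Aux
variable {n : ℕ}
open Finset

section Fiber3
variable {r₁ r₂ : Setoid (Fin n)} {x₀ y₀ : Fin n}
  {t : Setoid (Fin n)}

lemma M_le {htr₂ : t ≤ r₂} {e : Quotient t} (he : e ∈ Efin htr₂ x₀) :
    M t x₀ e ≤ r₂ := by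
  apply mergeCl_le htr₂
  rw [mem_Efin] at he
  have : Quotient.mk r₂ e.out = Quotient.mk r₂ x₀ := by
    rw [← pmap_mk htr₂ e.out, Quotient.out_eq e, he.1]
  exact r₂.symm (Quotient.exact this)

lemma r₂_x₀_out {htr₂ : t ≤ r₂} {e : Quotient t} (he : e ∈ Efin htr₂ x₀) :
    r₂ x₀ e.out := by
  rw [mem_Efin] at he
  have : Quotient.mk r₂ e.out = Quotient.mk r₂ x₀ := by
    rw [← pmap_mk htr₂ e.out, Quotient.out_eq e, he.1]
  exact r₂.symm (Quotient.exact this)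

lemma blocksIn_M_ne {htr₂ : t ≤ r₂} {e : Quotient t} (he : e ∈ Efin htr₂ x₀)
    {c : Quotient r₂} (hc : c ≠ Quotient.mk r₂ x₀) :
    blocksIn (M t x₀ e) r₂ c = blocksIn t r₂ c := by
  rw [blocksIn_eq_card (M_le he), blocksIn_eq_card htr₂]
  exact merge_fiber_card_ne htr₂ (r₂_x₀_out he) c hc

lemma blocksIn_M_eq {htr₂ : t ≤ r₂} {e : Quotient t} (he : e ∈ Efin htr₂ x₀) :
    blocksIn (M t x₀ e) r₂ (Quotient.mk r₂ x₀) + 1 =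
      blocksIn t r₂ (Quotient.mk r₂ x₀) := by
  rw [blocksIn_eq_card (M_le he), blocksIn_eq_card htr₂]
  exact merge_fiber_card_eq htr₂ (r₂_x₀_out he) (Efin_not_t htr₂ he)

lemma fiber_sum_zero (h2 : r₂ x₀ y₀) (h1 : ¬ r₁ x₀ y₀)
    (hrt : r₁ ≤ t) (htr₂ : t ≤ r₂) (hD : ∀ z, t x₀ z ↔ r₁ x₀ z) :
    ∑ s ∈ univ.filter
        (fun s : Setoid (Fin n) => (r₁ ≤ s ∧ s ≤ r₂) ∧ s ⊓ qs r₁ x₀ = t),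
      wt r₂ s = 0 := by
  rw [fiber_eq hrt htr₂ hD, Finset.sum_insert, Finset.sum_image
    (fun e he e' he' h => M_injOn htr₂ he he' h)]
  rotate_left
  · intro hmem
    obtain ⟨e, he, heq⟩ := Finset.mem_image.1 hmem
    exact t_ne_M htr₂ he heq.symm
  -- notation
  set c₀ : Quotient r₂ := Quotient.mk r₂ x₀ with hc₀
  set k := (Efin htr₂ x₀).card with hk
  have hbt : blocksIn t r₂ c₀ = k + 1 := (Efin_card htr₂).symm
  have hknz : 1 ≤ k := by
    rw [hk, Nat.one_le_iff_ne_zero, Ne, Finset.card_eq_zero, ← Ne,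
      ← Finset.nonempty_iff_ne_empty]
    refine ⟨Quotient.mk t y₀, ?_⟩
    rw [mem_Efin]
    constructor
    · exact Quotient.sound (r₂.symm h2)
    · intro h
      exact h1 ((hD y₀).1 (t.symm (Quotient.exact h)))
  set R : ℤ := ∏ c ∈ univ.erase c₀,
      ((-1) ^ blocksIn t r₂ c * ((blocksIn t r₂ c - 1).factorial : ℤ)) with hR
  have hwt : wt r₂ t = (-1) ^ (k + 1) * (k.factorial : ℤ) * R := by
    rw [wt, ← Finset.mul_prod_erase univ _ (mem_univ c₀), hbt]
    ring_nf
    simp [mul_comm, mul_assoc]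
    exact Or.inl hR.symm
  have hwM : ∀ e ∈ Efin htr₂ x₀,
      wt r₂ (M t x₀ e) = (-1) ^ k * ((k - 1).factorial : ℤ) * R := by
    intro e he
    have hbM : blocksIn (M t x₀ e) r₂ c₀ = k := by
      have := blocksIn_M_eq he
      rw [← hc₀] at this
      omega
    rw [wt, ← Finset.mul_prod_erase univ _ (mem_univ c₀), hbM]
    have hprod : ∏ c ∈ univ.erase c₀,
        ((-1 : ℤ) ^ blocksIn (M t x₀ e) r₂ c *
          ((blocksIn (M t x₀ e) r₂ c - 1).factorial : ℤ)) = R := by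
      apply Finset.prod_congr rfl
      intro c hc
      rw [blocksIn_M_ne he (Finset.ne_of_mem_erase hc)]
    rw [hprod]
  rw [hwt, Finset.sum_congr rfl hwM, Finset.sum_const, ← hk, nsmul_eq_mul]
  have hfac : (k : ℤ) * ((k - 1).factorial : ℤ) = (k.factorial : ℤ) := by
    exact_mod_cast congrArg (Nat.cast : ℕ → ℤ) (Nat.mul_factorial_pred (Nat.one_le_iff_ne_zero.mp hknz))
  have : ((-1 : ℤ)) ^ (k + 1) = -(-1) ^ k := by ring
  rw [this]
  linear_combination (R : ℤ) * ((-1 : ℤ)) ^ k * hfac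

end Fiber3
end Stmt8Aux

namespace Stmt8Aux
variable {n : ℕ}
open Finset

lemma pmap_refl {r : Setoid (Fin n)} (d : Quotient r) : pmap (le_refl r) d = d := by
  obtain ⟨x, rfl⟩ := Quotient.exists_rep d
  rfl

lemma blocksIn_self (r : Setoid (Fin n)) (c : Quotient r) : blocksIn r r c = 1 := by
  rw [blocksIn_eq_card (le_refl r)]
  simp only [pmap_refl]
  rw [Finset.filter_eq' univ c]
  simp

lemma wt_self (r : Setoid (Fin n)) : wt r r = (-1 : ℤ) ^ numBlocks r := by
  rw [wt]
  simp only [blocksIn_self]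
  simp [numBlocks_eq, Finset.card_univ]

lemma r₁_le_qs (r₁ : Setoid (Fin n)) (x₀ : Fin n) : r₁ ≤ qs r₁ x₀ := by
  intro a b hab
  exact ⟨fun h => r₁.trans h hab, fun h => r₁.trans h (r₁.symm hab)⟩

lemma keyid (r₁ r₂ : Setoid (Fin n)) :
    ∑ s : Setoid (Fin n), (if r₁ ≤ s ∧ s ≤ r₂ then wt r₂ s else 0) =
      if r₁ = r₂ then (-1 : ℤ) ^ numBlocks r₂ else 0 := by
  rw [← Finset.sum_filter]
  by_cases heq : r₁ = r₂
  · subst heq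
    rw [if_pos rfl]
    have : univ.filter (fun s : Setoid (Fin n) => r₁ ≤ s ∧ s ≤ r₁) = {r₁} := by
      ext s
      simp only [mem_filter, mem_univ, true_and, Finset.mem_singleton]
      constructor
      · rintro ⟨h1, h2⟩; exact le_antisymm h2 h1
      · rintro rfl; exact ⟨le_rfl, le_rfl⟩
    rw [this, Finset.sum_singleton, wt_self]
  · rw [if_neg heq]
    by_cases hle : r₁ ≤ r₂
    · -- main case
      obtain ⟨x₀, y₀, h2, h1⟩ : ∃ x y, r₂ x y ∧ ¬ r₁ x y := by
        by_contra hcon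
        push_neg at hcon
        exact heq (le_antisymm hle (fun a b hab => hcon a b hab))
      rw [← Finset.sum_fiberwise_of_maps_to
        (g := fun s : Setoid (Fin n) => s ⊓ qs r₁ x₀)
        (fun s _ => Finset.mem_univ _) (wt r₂)]
      apply Finset.sum_eq_zero
      intro t _
      rw [Finset.filter_filter]
      by_cases hne : (univ.filter
          (fun s : Setoid (Fin n) => (r₁ ≤ s ∧ s ≤ r₂) ∧ s ⊓ qs r₁ x₀ = t)).Nonempty
      · obtain ⟨s₀, hs₀⟩ := hne
        simp only [mem_filter, mem_univ, true_and] at hs₀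
        obtain ⟨⟨hs₁, hs₂⟩, hst⟩ := hs₀
        have hrt : r₁ ≤ t := hst ▸ le_inf hs₁ (r₁_le_qs r₁ x₀)
        have htr₂ : t ≤ r₂ := le_trans (hst ▸ inf_le_left) hs₂
        have hD : ∀ z, t x₀ z ↔ r₁ x₀ z := by
          intro z
          constructor
          · intro h
            have hq : qs r₁ x₀ x₀ z := (hst ▸ h : (s₀ ⊓ qs r₁ x₀) x₀ z).2
            exact (qs_iff.1 hq).1 (r₁.refl x₀)
          · intro h; exact hrt h
        exact fiber_sum_zero h2 h1 hrt htr₂ hD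
      · rw [Finset.not_nonempty_iff_eq_empty] at hne
        rw [hne, Finset.sum_empty]
    · -- the interval is empty
      apply Finset.sum_eq_zero
      intro s hs
      simp only [mem_filter, mem_univ, true_and] at hs
      exact absurd (le_trans hs.1 hs.2) hle

end Stmt8Aux

namespace Stmt8Aux
variable {n : ℕ}
open Finset

lemma wt_formula {s r₂ : Setoid (Fin n)} (h : s ≤ r₂) :
    (-1 : ℤ) ^ (numBlocks s - numBlocks r₂) *
        ∏ᶠ c : Quotient r₂, ((blocksIn s r₂ c - 1).factorial : ℤ) =
      (-1 : ℤ) ^ numBlocks r₂ * wt r₂ s := by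
  rw [finprod_eq_prod_of_fintype, wt, Finset.prod_mul_distrib,
    Finset.prod_pow_eq_pow_sum, sum_blocksIn h]
  have hba : numBlocks r₂ ≤ numBlocks s := numBlocks_le h
  obtain ⟨d, hd⟩ : ∃ d, numBlocks s = d + numBlocks r₂ :=
    ⟨numBlocks s - numBlocks r₂, (Nat.sub_add_cancel hba).symm⟩
  have h2 : ((-1 : ℤ)) ^ numBlocks r₂ * (-1) ^ numBlocks r₂ = 1 := by
    rw [← pow_add, ← two_mul, pow_mul]; norm_num
  rw [hd, Nat.add_sub_cancel, pow_add]
  set P : ℤ := ∏ c : Quotient r₂, ((blocksIn s r₂ c - 1).factorial : ℤ) with hP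
  linear_combination (-((-1 : ℤ) ^ d * P)) * h2

/-- The explicit candidate Möbius function. -/
noncomputable def Fm (s u : Setoid (Fin n)) : ℤ :=
  if s ≤ u then (-1 : ℤ) ^ numBlocks u * wt u s else 0

lemma Fm_inverse (r₁ r₂ : Setoid (Fin n)) :
    ∑ s : Setoid (Fin n), (if r₁ ≤ s then (1 : ℤ) else 0) * Fm s r₂ =
      if r₁ = r₂ then 1 else 0 := by
  have : ∀ s : Setoid (Fin n), (if r₁ ≤ s then (1 : ℤ) else 0) * Fm s r₂ =
      (-1 : ℤ) ^ numBlocks r₂ * (if r₁ ≤ s ∧ s ≤ r₂ then wt r₂ s else 0) := by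
    intro s
    rw [Fm]
    by_cases h1 : r₁ ≤ s <;> by_cases h2 : s ≤ r₂ <;>
      simp [h1, h2, mul_comm, mul_assoc]
  rw [Finset.sum_congr rfl (fun s _ => this s), ← Finset.mul_sum, keyid]
  by_cases heq : r₁ = r₂
  · simp only [heq, if_pos rfl, mul_one, if_true]
    rw [← pow_add, ← two_mul, pow_mul]; norm_num
  · simp [heq]

end Stmt8Aux

theorem stmt8 (n : ℕ) (hn : 0 < n) (mu : Setoid (Fin n) → Setoid (Fin n) → ℤ)
    (hmu₁ : ∀ r₁ r₂ : Setoid (Fin n),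
      (∑ᶠ r' : Setoid (Fin n), (if r₁ ≤ r' then 1 else 0) * mu r' r₂) =
        if r₁ = r₂ then 1 else 0)
    (hmu₂ : ∀ r₁ r₂ : Setoid (Fin n),
      (∑ᶠ r' : Setoid (Fin n), mu r₁ r' * (if r' ≤ r₂ then 1 else 0)) =
        if r₁ = r₂ then 1 else 0)
    (r r' : Setoid (Fin n)) (hle : r ≤ r') :
    mu r r' = (-1 : ℤ) ^ (numBlocks r - numBlocks r') *
      ∏ᶠ c : Quotient r', (Nat.factorial (blocksIn r r' c - 1) : ℤ) := by
  classical
  open Stmt8Aux Finset in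
  have hmu₂' : ∀ r₁ r₂ : Setoid (Fin n),
      (∑ s : Setoid (Fin n), mu r₁ s * (if s ≤ r₂ then (1 : ℤ) else 0)) =
        if r₁ = r₂ then 1 else 0 := by
    intro r₁ r₂
    rw [← finsum_eq_sum_of_fintype]
    exact hmu₂ r₁ r₂
  have hFm : mu r r' = Stmt8Aux.Fm r r' := by
    have hA : ∑ t : Setoid (Fin n),
        (∑ s : Setoid (Fin n), mu r s * (if s ≤ t then (1 : ℤ) else 0)) * Fm t r' =
        Fm r r' := by
      have : ∀ t : Setoid (Fin n),
          (∑ s : Setoid (Fin n), mu r s * (if s ≤ t then (1 : ℤ) else 0)) * Fm t r' =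
          if r = t then Fm t r' else 0 := by
        intro t
        rw [hmu₂' r t]
        by_cases h : r = t <;> simp [h]
      rw [Finset.sum_congr rfl (fun t _ => this t), Finset.sum_ite_eq]
      simp
    have hB : ∑ t : Setoid (Fin n),
        (∑ s : Setoid (Fin n), mu r s * (if s ≤ t then (1 : ℤ) else 0)) * Fm t r' =
        mu r r' := by
      simp_rw [Finset.sum_mul]
      rw [Finset.sum_comm]
      simp_rw [mul_assoc, ← Finset.mul_sum]
      have : ∀ s : Setoid (Fin n),
          mu r s * (∑ t : Setoid (Fin n), (if s ≤ t then (1 : ℤ) else 0) * Fm t r') =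
          mu r s * (if s = r' then 1 else 0) := by
        intro s
        rw [Fm_inverse s r']
      rw [Finset.sum_congr rfl (fun s _ => this s)]
      simp_rw [mul_ite, mul_one, mul_zero]
      rw [Finset.sum_ite_eq']
      simp
    rw [← hA, hB]
  rw [hFm, Stmt8Aux.Fm, if_pos hle]
  exact (Stmt8Aux.wt_formula hle).symm
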